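/- Consider the meta-edge gadget: the simple graph on five vertices {u, w, v, x, y} with edges {u,w} and {w,v} of weight a > 0 and whisker edges {w,x} and {w,y} of weight b > 0. Every walk in this graph that starts at u, ends at v, traverses every edge at least once, and traverses each of the weight-a edges {u,w} and {w,v} exactly once, has total weighted length at least 2a + 4b (each whisker must be traversed at least twice). Moreover, there is such a walk of total weighted length exactly 2a + 4b. -/

import Mathlib

/-- The meta-edge gadget: vertices `0 = u`, `1 = w`, `2 = v`, `3 = x`, `4 = y`, with
edges `{u,w}`, `{w,v}` (the two weight-`a` edges) and whiskers `{w,x}`, `{w,y}`. -/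
def gadget : SimpleGraph (Fin 5) :=
  SimpleGraph.fromEdgeSet {s(0, 1), s(1, 2), s(1, 3), s(1, 4)}

open SimpleGraph in
lemma walk_even_countP {V : Type*} [DecidableEq V] {G : SimpleGraph V} {u v : V}
    (p : G.Walk u v) (x : V) :
    Even (p.edges.countP fun e => x ∈ e) ↔ u ≠ v → x ≠ u ∧ x ≠ v := by
  induction' p with u u v w huv p ih
  · simp
  · simp only [List.countP_cons, Ne, SimpleGraph.Walk.edges_cons, Sym2.mem_iff]
    split_ifs with h
    · rw [decide_eq_true_eq] at h
      obtain (rfl | rfl) := h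
      · rw [Nat.even_add_one, ih]
        simp only [huv.ne, imp_false, Ne, not_false_iff, true_and, not_forall,
          Classical.not_not, exists_prop, eq_self_iff_true, not_true, false_and,
          and_iff_right_iff_imp]
        rintro rfl rfl
        exact G.loopless.irrefl _ huv
      · rw [Nat.even_add_one, ih, ← not_iff_not]
        simp only [huv.ne.symm, Ne, eq_self_iff_true, not_true, false_and, not_forall,
          not_false_iff, exists_prop, and_true, Classical.not_not, true_and, iff_and_self]
        rintro rfl
        exact huv.ne
    · rw [decide_eq_true_eq, not_or] at h
      simp only [h.1, h.2, not_false_iff, true_and, add_zero, Ne] at ih ⊢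
      rw [ih]
      constructor <;>
        · rintro h' h'' rfl
          simp only [imp_false, eq_self_iff_true, not_true, Classical.not_not] at h'
          cases h'
          simp only [not_true, and_false, false_and] at h

lemma gadget_edges_mem (e : Sym2 (Fin 5)) (he : e ∈ gadget.edgeSet) :
    e = s(0,1) ∨ e = s(1,2) ∨ e = s(1,3) ∨ e = s(1,4) := by
  rw [gadget, SimpleGraph.edgeSet_fromEdgeSet] at he
  obtain ⟨h, -⟩ := he
  simpa using h

lemma sum_map_eq (wt : Sym2 (Fin 5) → ℝ) (l : List (Sym2 (Fin 5)))
    (h : ∀ e ∈ l, e = s(0,1) ∨ e = s(1,2) ∨ e = s(1,3) ∨ e = s(1,4)) :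
    (l.map wt).sum = (l.count s(0,1)) * wt s(0,1) + (l.count s(1,2)) * wt s(1,2)
      + (l.count s(1,3)) * wt s(1,3) + (l.count s(1,4)) * wt s(1,4) := by
  induction l with
  | nil => simp
  | cons e t ih =>
    have ht : ∀ e ∈ t, e = s(0,1) ∨ e = s(1,2) ∨ e = s(1,3) ∨ e = s(1,4) :=
      fun x hx => h x (List.mem_cons_of_mem _ hx)
    have he := h e List.mem_cons_self
    rcases he with rfl | rfl | rfl | rfl <;>
      simp [List.count_cons, ih ht] <;> push_cast <;> ring

lemma gadget_adj : gadget.Adj 0 1 ∧ gadget.Adj 1 2 ∧ gadget.Adj 1 3 ∧ gadget.Adj 3 1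
    ∧ gadget.Adj 1 4 ∧ gadget.Adj 4 1 := by
  simp only [gadget, SimpleGraph.fromEdgeSet_adj, Set.mem_insert_iff, Set.mem_singleton_iff]
  refine ⟨?_, ?_, ?_, ?_, ?_, ?_⟩ <;> constructor <;> decide

/-- Every walk in the meta-edge gadget from `u` to `v` that traverses
every edge at least once and each of the weight-`a` edges `{u,w}`, `{w,v}` exactly once
has total weighted length at least `2a + 4b`; moreover some such walk has total weighted
length exactly `2a + 4b`. -/
theorem gadget_walk_cost (a b : ℝ) (ha : 0 < a) (hb : 0 < b)
    (wt : Sym2 (Fin 5) → ℝ)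
    (h01 : wt s(0, 1) = a) (h12 : wt s(1, 2) = a)
    (h13 : wt s(1, 3) = b) (h14 : wt s(1, 4) = b) :
    (∀ p : gadget.Walk 0 2,
      (∀ e ∈ gadget.edgeSet, e ∈ p.edges) →
      p.edges.count s(0, 1) = 1 → p.edges.count s(1, 2) = 1 →
      2 * a + 4 * b ≤ (p.edges.map wt).sum) ∧
    (∃ p : gadget.Walk 0 2,
      (∀ e ∈ gadget.edgeSet, e ∈ p.edges) ∧
      p.edges.count s(0, 1) = 1 ∧ p.edges.count s(1, 2) = 1 ∧
      (p.edges.map wt).sum = 2 * a + 4 * b) := by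
  obtain ⟨ha01, ha12, ha13, ha31, ha14, ha41⟩ := gadget_adj
  constructor
  · intro p hall c01 c12
    have hmem : ∀ e ∈ p.edges, e = s(0,1) ∨ e = s(1,2) ∨ e = s(1,3) ∨ e = s(1,4) :=
      fun e he => gadget_edges_mem e (p.edges_subset_edgeSet he)
    have key : ∀ (x : Fin 5) (f : Sym2 (Fin 5)),
        x ≠ 0 → x ≠ 2 →
        (∀ e ∈ p.edges, (x ∈ e) ↔ e = f) → f ∈ gadget.edgeSet →
        2 ≤ p.edges.count f := by
      intro x f hx0 hx2 hx hf
      have heven : Even (p.edges.count f) := by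
        have h1 := (walk_even_countP p x).2 (fun _ => ⟨hx0, hx2⟩)
        have heq : List.countP (fun e => decide (x ∈ e)) p.edges = p.edges.count f := by
          rw [List.count_eq_countP]
          exact List.countP_congr (fun e he => by
            simp only [decide_eq_true_eq, hx e he, beq_iff_eq])
        rwa [heq] at h1
      have hpos : 0 < p.edges.count f := List.count_pos_iff.2 (hall f hf)
      obtain ⟨k, hk⟩ := heven
      omega
    have c13 : 2 ≤ p.edges.count s(1,3) := by
      refine key 3 _ (by decide) (by decide) (fun e he => ?_) (gadget.mem_edgeSet.2 ha13)
      rcases hmem e he with rfl | rfl | rfl | rfl <;> simp <;> decide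
    have c14 : 2 ≤ p.edges.count s(1,4) := by
      refine key 4 _ (by decide) (by decide) (fun e he => ?_) (gadget.mem_edgeSet.2 ha14)
      rcases hmem e he with rfl | rfl | rfl | rfl <;> simp <;> decide
    rw [sum_map_eq wt _ hmem, c01, c12, h01, h12, h13, h14]
    have : (4 : ℝ) * b ≤ (p.edges.count s(1,3) : ℝ) * b + (p.edges.count s(1,4) : ℝ) * b := by
      have h1 : (2 : ℝ) ≤ (p.edges.count s(1,3) : ℝ) := by exact_mod_cast c13
      have h2 : (2 : ℝ) ≤ (p.edges.count s(1,4) : ℝ) := by exact_mod_cast c14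
      nlinarith
    push_cast
    linarith
  · refine ⟨.cons ha01 (.cons ha13 (.cons ha31 (.cons ha14 (.cons ha41 (.cons ha12 .nil))))),
      ?_, ?_, ?_, ?_⟩
    · intro e he
      rcases gadget_edges_mem e he with rfl | rfl | rfl | rfl <;>
        simp [Sym2.eq_iff] <;> decide
    · simp [List.count_cons] <;> decide
    · simp [List.count_cons] <;> decide
    · simp [List.count_cons, Sym2.eq_iff]
      rw [show (s(3,1) : Sym2 (Fin 5)) = s(1,3) from Sym2.eq_swap,
        show (s(4,1) : Sym2 (Fin 5)) = s(1,4) from Sym2.eq_swap, h01, h12, h13, h14]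
      ring
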